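/- In the first Heisenberg group ℍ¹ = ℝ³ with group law (x,y,t)·(x',y',t') = (x+x', y+y', t+t' + (xy' − yx')/2), dilations δ_r(x,y,t) = (rx, ry, r²t), and a homogeneous norm ‖·‖ with d(p,q) = ‖q⁻¹ p‖: let γ : [0,1] → ℍ¹ be a C^{1,α} curve with γ(t₀) = 0 and γ'(t₀) = (a, b, 0), and suppose γ is horizontal in the sense that γ₃'(t) = (γ₁(t) γ₂'(t) − γ₂(t) γ₁'(t))/2 for all t. Let L(t) = ((t−t₀)a, (t−t₀)b, 0). Then d(γ(t), L(t)) ≲ |t − t₀|^{1 + α/2} for all t ∈ [0,1], with implicit constant depending on γ. -/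

import Mathlib

open Set

/-- Mean value estimate on an unordered interval. -/
lemma mvt_abs (f g : ℝ → ℝ) (t₀ t K : ℝ)
    (hf : ∀ u ∈ uIcc t₀ t, HasDerivWithinAt f (g u) (uIcc t₀ t) u)
    (hg : ∀ u ∈ uIcc t₀ t, |g u| ≤ K) :
    |f t - f t₀| ≤ K * |t - t₀| := by
  have := Convex.norm_image_sub_le_of_norm_hasDerivWithin_le hf
    (fun u hu => by simpa [Real.norm_eq_abs] using hg u hu)
    (convex_uIcc t₀ t) left_mem_uIcc right_mem_uIcc
  simpa [Real.norm_eq_abs] using this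

/-- The Heisenberg group product on `ℝ³`:
`(x,y,t)·(x',y',t') = (x+x', y+y', t+t'+(xy'−yx')/2)`. -/
noncomputable def heisMul (p q : ℝ × ℝ × ℝ) : ℝ × ℝ × ℝ :=
  (p.1 + q.1, p.2.1 + q.2.1, p.2.2 + q.2.2 + (p.1 * q.2.1 - p.2.1 * q.1) / 2)

/-- A homogeneous norm on the Heisenberg group: `‖(x,y,t)‖ = max(|(x,y)|, |t|^{1/2})`. -/
noncomputable def heisNorm (p : ℝ × ℝ × ℝ) : ℝ :=
  max (Real.sqrt (p.1 ^ 2 + p.2.1 ^ 2)) (Real.sqrt |p.2.2|)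

/-- The left-invariant homogeneous distance `d(p,q) = ‖q⁻¹ p‖`, with `q⁻¹ = −q`. -/
noncomputable def heisDist (p q : ℝ × ℝ × ℝ) : ℝ :=
  heisNorm (heisMul (-q.1, -q.2.1, -q.2.2) p)

/-- If `γ : [0,1] → ℍ¹` is a horizontal `C^{1,α}` curve with
`γ(t₀) = 0` and `γ'(t₀) = (a,b,0)`, and `L(t) = ((t−t₀)a, (t−t₀)b, 0)` is its
horizontal tangent line at `t₀`, then `d(γ(t), L(t)) ≲ |t−t₀|^{1+α/2}`. -/
theorem stmt_11 (α : ℝ) (hα : α ∈ Ioc (0:ℝ) 1) (Cα : ℝ)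
    (γ1 γ2 γ3 g1 g2 g3 : ℝ → ℝ) (t₀ a b : ℝ) (ht₀ : t₀ ∈ Icc (0:ℝ) 1)
    (hd1 : ∀ t ∈ Icc (0:ℝ) 1, HasDerivWithinAt γ1 (g1 t) (Icc 0 1) t)
    (hd2 : ∀ t ∈ Icc (0:ℝ) 1, HasDerivWithinAt γ2 (g2 t) (Icc 0 1) t)
    (hd3 : ∀ t ∈ Icc (0:ℝ) 1, HasDerivWithinAt γ3 (g3 t) (Icc 0 1) t)
    (hH1 : ∀ t ∈ Icc (0:ℝ) 1, ∀ u ∈ Icc (0:ℝ) 1, |g1 t - g1 u| ≤ Cα * |t - u| ^ α)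
    (hH2 : ∀ t ∈ Icc (0:ℝ) 1, ∀ u ∈ Icc (0:ℝ) 1, |g2 t - g2 u| ≤ Cα * |t - u| ^ α)
    (hH3 : ∀ t ∈ Icc (0:ℝ) 1, ∀ u ∈ Icc (0:ℝ) 1, |g3 t - g3 u| ≤ Cα * |t - u| ^ α)
    (hzero : γ1 t₀ = 0 ∧ γ2 t₀ = 0 ∧ γ3 t₀ = 0)
    (hder0 : g1 t₀ = a ∧ g2 t₀ = b ∧ g3 t₀ = 0)
    (hhoriz : ∀ t ∈ Icc (0:ℝ) 1, g3 t = (γ1 t * g2 t - γ2 t * g1 t) / 2) :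
    ∃ C : ℝ, 0 < C ∧ ∀ t ∈ Icc (0:ℝ) 1,
      heisDist (γ1 t, γ2 t, γ3 t) ((t - t₀) * a, (t - t₀) * b, 0)
        ≤ C * |t - t₀| ^ (1 + α / 2) := by
  obtain ⟨hα0, hα1⟩ := hα
  obtain ⟨hz1, hz2, hz3⟩ := hzero
  obtain ⟨hda, hdb, hdc⟩ := hder0
  -- Cα is nonnegative
  have hCα : 0 ≤ Cα := by
    have h := hH1 0 (by norm_num) 1 (by norm_num)
    have h1 : |(0:ℝ) - 1| ^ α = 1 := by
      rw [show |(0:ℝ) - 1| = 1 by norm_num, Real.one_rpow]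
    rw [h1, mul_one] at h
    exact le_trans (abs_nonneg _) h
  set M : ℝ := Cα + 2*|a| + 2*|b| with hMdef
  have hM0 : 0 ≤ M := by positivity
  refine ⟨2*Cα + Real.sqrt (Cα*M) + 1, by positivity, ?_⟩
  intro t ht
  have hmem : ∀ u ∈ uIcc t₀ t, u ∈ Icc (0:ℝ) 1 := fun u hu => uIcc_subset_Icc ht₀ ht hu
  by_cases hts : t = t₀
  · subst hts
    simp only [heisDist, heisMul, heisNorm, sub_self, zero_mul, neg_zero, zero_add, add_zero,
      hz1, hz2, hz3, abs_zero]
    rw [Real.zero_rpow (by positivity)]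
    norm_num [Real.sqrt_eq_zero']
  -- general case
  set s := |t - t₀| with hsdef
  have hs0 : 0 < s := abs_pos.mpr (sub_ne_zero.mpr hts)
  have hs1 : s ≤ 1 := by
    rw [hsdef, abs_le]; constructor <;> [linarith [ht.1, ht₀.2]; linarith [ht.2, ht₀.1]]
  have habs : ∀ u ∈ uIcc t₀ t, |u - t₀| ≤ s := by
    intro u hu
    rw [Set.mem_uIcc] at hu
    rw [hsdef, abs_le]
    rcases hu with ⟨h1, h2⟩ | ⟨h1, h2⟩ <;> cases abs_cases (t - t₀) <;>
      constructor <;> linarith [abs_nonneg (t - t₀)]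
  -- pointwise Hölder bounds on the segment
  have hK1 : ∀ u ∈ uIcc t₀ t, |g1 u - a| ≤ Cα * s ^ α := by
    intro u hu
    calc |g1 u - a| = |g1 u - g1 t₀| := by rw [hda]
      _ ≤ Cα * |u - t₀| ^ α := hH1 u (hmem u hu) t₀ ht₀
      _ ≤ Cα * s ^ α := by
          gcongr
          exact habs u hu
  have hK2 : ∀ u ∈ uIcc t₀ t, |g2 u - b| ≤ Cα * s ^ α := by
    intro u hu
    calc |g2 u - b| = |g2 u - g2 t₀| := by rw [hdb]
      _ ≤ Cα * |u - t₀| ^ α := hH2 u (hmem u hu) t₀ ht₀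
      _ ≤ Cα * s ^ α := by
          gcongr
          exact habs u hu
  -- first-layer estimates, valid at every point of the segment
  have Ex : ∀ u ∈ uIcc t₀ t, |γ1 u - (u - t₀) * a| ≤ Cα * s ^ α * s := by
    intro u hu
    have hsub : uIcc t₀ u ⊆ uIcc t₀ t := uIcc_subset_uIcc left_mem_uIcc hu
    have h := mvt_abs (fun v => γ1 v - (v - t₀) * a) (fun v => g1 v - a) t₀ u (Cα * s ^ α)
      (fun v hv => by
        have := ((hd1 v (hmem v (hsub hv))).mono (fun w hw => hmem w (hsub hw))).sub
          (((hasDerivWithinAt_id v (uIcc t₀ u)).sub_const t₀).mul_const a)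
        exact this.congr_deriv (by ring))
      (fun v hv => hK1 v (hsub hv))
    simp only [hz1, sub_self, zero_mul, sub_zero] at h
    calc |γ1 u - (u - t₀) * a| ≤ Cα * s ^ α * |u - t₀| := h
      _ ≤ Cα * s ^ α * s := mul_le_mul_of_nonneg_left (habs u hu) (by positivity)
  have Ey : ∀ u ∈ uIcc t₀ t, |γ2 u - (u - t₀) * b| ≤ Cα * s ^ α * s := by
    intro u hu
    have hsub : uIcc t₀ u ⊆ uIcc t₀ t := uIcc_subset_uIcc left_mem_uIcc hu
    have h := mvt_abs (fun v => γ2 v - (v - t₀) * b) (fun v => g2 v - b) t₀ u (Cα * s ^ α)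
      (fun v hv => by
        have := ((hd2 v (hmem v (hsub hv))).mono (fun w hw => hmem w (hsub hw))).sub
          (((hasDerivWithinAt_id v (uIcc t₀ u)).sub_const t₀).mul_const b)
        exact this.congr_deriv (by ring))
      (fun v hv => hK2 v (hsub hv))
    simp only [hz2, sub_self, zero_mul, sub_zero] at h
    calc |γ2 u - (u - t₀) * b| ≤ Cα * s ^ α * |u - t₀| := h
      _ ≤ Cα * s ^ α * s := mul_le_mul_of_nonneg_left (habs u hu) (by positivity)
  -- bounds on g1, g2 themselves
  have hg2b : ∀ u ∈ uIcc t₀ t, |g2 u + b| ≤ M := by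
    intro u hu
    have h := hK2 u hu
    have hsα : s ^ α ≤ 1 := Real.rpow_le_one (le_of_lt hs0) hs1 (le_of_lt hα0)
    have : |g2 u + b| ≤ |g2 u - b| + 2 * |b| := by
      have := abs_add_le (g2 u - b) (2 * b)
      simp only [abs_mul] at this ⊢
      calc |g2 u + b| = |(g2 u - b) + 2 * b| := by ring_nf
        _ ≤ |g2 u - b| + |2 * b| := abs_add_le _ _
        _ = |g2 u - b| + 2 * |b| := by rw [abs_mul]; norm_num
    rw [hMdef]; nlinarith [abs_nonneg b, abs_nonneg a]
  have hg1a : ∀ u ∈ uIcc t₀ t, |g1 u + a| ≤ M := by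
    intro u hu
    have h := hK1 u hu
    have hsα : s ^ α ≤ 1 := Real.rpow_le_one (le_of_lt hs0) hs1 (le_of_lt hα0)
    have : |g1 u + a| ≤ |g1 u - a| + 2 * |a| := by
      calc |g1 u + a| = |(g1 u - a) + 2 * a| := by ring_nf
        _ ≤ |g1 u - a| + |2 * a| := abs_add_le _ _
        _ = |g1 u - a| + 2 * |a| := by rw [abs_mul]; norm_num
    rw [hMdef]; nlinarith [abs_nonneg b, abs_nonneg a]
  -- the vertical estimate
  have EF : |γ3 t - (t - t₀) * (a * γ2 t - b * γ1 t) / 2| ≤ Cα * M * s ^ α * s * s := by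
    have h := mvt_abs (fun v => γ3 v - (v - t₀) * (a * γ2 v - b * γ1 v) / 2)
      (fun v => ((γ1 v - (v - t₀) * a) * (g2 v + b) - (γ2 v - (v - t₀) * b) * (g1 v + a)) / 2)
      t₀ t (Cα * M * s ^ α * s)
      (fun v hv => by
        have hD := ((hd3 v (hmem v hv)).mono hmem).sub
          (((((hasDerivWithinAt_id v (uIcc t₀ t)).sub_const t₀).mul
            ((((hd2 v (hmem v hv)).mono hmem).const_mul a).sub
             (((hd1 v (hmem v hv)).mono hmem).const_mul b))).div_const 2))
        have heq : g3 v - (1 * (a * γ2 v - b * γ1 v) + (v - t₀) * (a * g2 v - b * g1 v)) / 2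
            = ((γ1 v - (v - t₀) * a) * (g2 v + b) - (γ2 v - (v - t₀) * b) * (g1 v + a)) / 2 := by
          rw [hhoriz v (hmem v hv)]; ring
        simp only [id_eq] at hD
        exact hD.congr_deriv heq)
      (fun v hv => by
        have h1 := Ex v hv
        have h2 := Ey v hv
        have h3 := hg1a v hv
        have h4 := hg2b v hv
        have e1 : |(γ1 v - (v - t₀) * a) * (g2 v + b)| ≤ Cα * s ^ α * s * M := by
          rw [abs_mul]
          exact mul_le_mul h1 h4 (abs_nonneg _) (by positivity)
        have e2 : |(γ2 v - (v - t₀) * b) * (g1 v + a)| ≤ Cα * s ^ α * s * M := by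
          rw [abs_mul]
          exact mul_le_mul h2 h3 (abs_nonneg _) (by positivity)
        have hring : Cα * M * s ^ α * s = Cα * s ^ α * s * M := by ring
        calc |((γ1 v - (v - t₀) * a) * (g2 v + b) - (γ2 v - (v - t₀) * b) * (g1 v + a)) / 2|
            = |(γ1 v - (v - t₀) * a) * (g2 v + b) - (γ2 v - (v - t₀) * b) * (g1 v + a)| / 2 := by
              rw [abs_div, abs_two]
          _ ≤ (|(γ1 v - (v - t₀) * a) * (g2 v + b)| + |(γ2 v - (v - t₀) * b) * (g1 v + a)|) / 2 := by
              linarith [abs_sub (((γ1 v - (v - t₀) * a) * (g2 v + b))) ((γ2 v - (v - t₀) * b) * (g1 v + a))]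
          _ ≤ (Cα * s ^ α * s * M + Cα * s ^ α * s * M) / 2 := by gcongr
          _ = Cα * M * s ^ α * s := by ring)
    simp only [hz3, sub_self, zero_mul, zero_div, sub_zero] at h
    calc |γ3 t - (t - t₀) * (a * γ2 t - b * γ1 t) / 2| ≤ Cα * M * s ^ α * s * |t - t₀| := h
      _ = Cα * M * s ^ α * s * s := by rw [← hsdef]
  -- assemble
  have E1 := Ex t right_mem_uIcc
  have E2 := Ey t right_mem_uIcc
  -- unfold the distance
  simp only [heisDist, heisMul, heisNorm]
  have hzeq : -0 + γ3 t + (-((t - t₀) * a) * γ2 t - -((t - t₀) * b) * γ1 t) / 2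
      = γ3 t - (t - t₀) * (a * γ2 t - b * γ1 t) / 2 := by ring
  rw [max_le_iff]
  constructor
  · -- horizontal part
    have hXY : Real.sqrt ((-((t - t₀) * a) + γ1 t) ^ 2 + (-((t - t₀) * b) + γ2 t) ^ 2)
        ≤ |γ1 t - (t - t₀) * a| + |γ2 t - (t - t₀) * b| := by
      rw [show -((t - t₀) * a) + γ1 t = γ1 t - (t - t₀) * a by ring,
          show -((t - t₀) * b) + γ2 t = γ2 t - (t - t₀) * b by ring]
      have := Real.sqrt_le_sqrt (show (γ1 t - (t - t₀) * a) ^ 2 + (γ2 t - (t - t₀) * b) ^ 2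
          ≤ (|γ1 t - (t - t₀) * a| + |γ2 t - (t - t₀) * b|) ^ 2 by
        nlinarith [abs_nonneg (γ1 t - (t - t₀) * a), abs_nonneg (γ2 t - (t - t₀) * b),
          sq_abs (γ1 t - (t - t₀) * a), sq_abs (γ2 t - (t - t₀) * b),
          mul_nonneg (abs_nonneg (γ1 t - (t - t₀) * a)) (abs_nonneg (γ2 t - (t - t₀) * b))])
      calc Real.sqrt ((γ1 t - (t - t₀) * a) ^ 2 + (γ2 t - (t - t₀) * b) ^ 2)
          ≤ Real.sqrt ((|γ1 t - (t - t₀) * a| + |γ2 t - (t - t₀) * b|) ^ 2) := this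
        _ = |γ1 t - (t - t₀) * a| + |γ2 t - (t - t₀) * b| := by
            rw [Real.sqrt_sq (by positivity)]
    have hmono : s ^ α * s ≤ s ^ (1 + α / 2) := by
      have h1 : s ^ α * s = s ^ (1 + α) := by
        rw [Real.rpow_add hs0, Real.rpow_one]; ring
      rw [h1]
      exact Real.rpow_le_rpow_of_exponent_ge hs0 hs1 (by linarith)
    calc Real.sqrt ((-((t - t₀) * a) + γ1 t) ^ 2 + (-((t - t₀) * b) + γ2 t) ^ 2)
        ≤ |γ1 t - (t - t₀) * a| + |γ2 t - (t - t₀) * b| := hXY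
      _ ≤ Cα * s ^ α * s + Cα * s ^ α * s := add_le_add E1 E2
      _ = 2 * Cα * (s ^ α * s) := by ring
      _ ≤ 2 * Cα * s ^ (1 + α / 2) := mul_le_mul_of_nonneg_left hmono (by positivity)
      _ ≤ (2 * Cα + Real.sqrt (Cα * M) + 1) * s ^ (1 + α / 2) :=
          mul_le_mul_of_nonneg_right (by linarith [Real.sqrt_nonneg (Cα * M)])
            (le_of_lt (Real.rpow_pos_of_pos hs0 _))
  · -- vertical part
    rw [hzeq]
    have hFb : |γ3 t - (t - t₀) * (a * γ2 t - b * γ1 t) / 2| ≤ Cα * M * (s ^ (1 + α / 2)) ^ 2 := by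
      have : Cα * M * s ^ α * s * s = Cα * M * (s ^ (1 + α / 2)) ^ 2 := by
        rw [← Real.rpow_natCast (s ^ (1 + α / 2)) 2, ← Real.rpow_mul (le_of_lt hs0)]
        rw [show ((1:ℝ) + α / 2) * (2:ℕ) = α + 1 + 1 by push_cast; ring]
        rw [Real.rpow_add hs0, Real.rpow_add hs0, Real.rpow_one]
        ring
      rw [← this]; exact EF
    calc Real.sqrt |γ3 t - (t - t₀) * (a * γ2 t - b * γ1 t) / 2|
        ≤ Real.sqrt (Cα * M * (s ^ (1 + α / 2)) ^ 2) := Real.sqrt_le_sqrt hFb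
      _ = Real.sqrt (Cα * M) * s ^ (1 + α / 2) := by
          rw [Real.sqrt_mul (by positivity),
            Real.sqrt_sq (le_of_lt (Real.rpow_pos_of_pos hs0 _))]
      _ ≤ (2 * Cα + Real.sqrt (Cα * M) + 1) * s ^ (1 + α / 2) :=
          mul_le_mul_of_nonneg_right (by linarith [Real.sqrt_nonneg (Cα * M)])
            (le_of_lt (Real.rpow_pos_of_pos hs0 _))
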